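/- Let d ≥ 2, let C, D ∈ C^d_* be closed convex cones of positive dimension, and let x ∈ ℝ^d. Then ‖Π_C(x) − Π_D(x)‖ ≤ ‖x‖ · √(10 δ_a(C,D)). -/

import Mathlib

open Set MeasureTheory
open scoped RealInnerProductSpace ENNReal NNReal

attribute [local instance] Classical.propDecidable

noncomputable section

/-- `ℝ^d` with its Euclidean structure. -/
abbrev Euc (d : ℕ) := EuclideanSpace ℝ (Fin d)

/-- A closed convex cone (with apex `o`) in `ℝ^d`. -/
def IsClosedConvexCone {d : ℕ} (C : Set (Euc d)) : Prop :=
  C.Nonempty ∧ IsClosed C ∧ Convex ℝ C ∧ ∀ x ∈ C, ∀ r : ℝ, 0 ≤ r → r • x ∈ C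

/-- A cone has positive dimension iff it contains a nonzero point. -/
def PosDim {d : ℕ} (C : Set (Euc d)) : Prop := ∃ x ∈ C, x ≠ 0

/-- The dual (polar) cone `C° = {x : ⟪x,y⟫ ≤ 0 ∀ y ∈ C}`. -/
def dualCone {d : ℕ} (C : Set (Euc d)) : Set (Euc d) :=
  {x | ∀ y ∈ C, ⟪x, y⟫ ≤ 0}

/-- The metric projection (nearest point map) onto a set; junk value `0` if
no nearest point exists.  For a nonempty closed convex set this is the usual
(unique) nearest-point map. -/
def metricProj {d : ℕ} (C : Set (Euc d)) (x : Euc d) : Euc d :=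
  if h : ∃ y ∈ C, ∀ z ∈ C, dist x y ≤ dist x z then h.choose else 0

/-- The angular distance `d_a(x, C) = arccos (‖Π_C x‖ / ‖x‖)` for `x ≠ o`,
and `d_a(o, C) = π/2`. -/
def angDist {d : ℕ} (C : Set (Euc d)) (x : Euc d) : ℝ :=
  if x = 0 then Real.pi / 2 else Real.arccos (‖metricProj C x‖ / ‖x‖)

/-- The angular parallel set `C_λ^a = {x : d_a(x,C) ≤ λ}`. -/
def angParallel {d : ℕ} (C : Set (Euc d)) (l : ℝ) : Set (Euc d) :=
  {x | angDist C x ≤ l}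

/-- The angular Hausdorff distance
`δ_a(C,D) = min {λ ≥ 0 : C ⊆ D_λ^a, D ⊆ C_λ^a}`. -/
def angHaus {d : ℕ} (C D : Set (Euc d)) : ℝ :=
  sInf {l : ℝ | 0 ≤ l ∧ C ⊆ angParallel D l ∧ D ⊆ angParallel C l}

/-- The standard Gaussian measure `γ_d` on `ℝ^d`. -/
def stdGaussian (d : ℕ) : Measure (Euc d) :=
  volume.withDensity fun x =>
    ENNReal.ofReal ((2 * Real.pi) ^ (-(d : ℝ) / 2) * Real.exp (-‖x‖ ^ 2 / 2))

/-- The biconic σ-algebra on `ℝ^d × ℝ^d`: Borel sets invariant under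
separate positive scaling of the two components. -/
def biconicMS (d : ℕ) : MeasurableSpace (Euc d × Euc d) where
  MeasurableSet' η := MeasurableSet η ∧
    ∀ p ∈ η, ∀ a b : ℝ, 0 < a → 0 < b → (a • p.1, b • p.2) ∈ η
  measurableSet_empty := ⟨MeasurableSet.empty, fun p hp => absurd hp (notMem_empty p)⟩
  measurableSet_compl := by
    rintro η ⟨hm, hinv⟩
    refine ⟨hm.compl, ?_⟩
    rintro p hp a b ha hb hmem
    apply hp
    have h2 := hinv _ hmem a⁻¹ b⁻¹ (by positivity) (by positivity)
    simpa [smul_smul, inv_mul_cancel₀ ha.ne', inv_mul_cancel₀ hb.ne'] using h2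
  measurableSet_iUnion := by
    rintro s hs
    refine ⟨MeasurableSet.iUnion fun i => (hs i).1, ?_⟩
    rintro p hp a b ha hb
    obtain ⟨i, hi⟩ := mem_iUnion.1 hp
    exact mem_iUnion.2 ⟨i, (hs i).2 p hi a b ha hb⟩

/-- A polyhedral cone: a finite intersection of closed halfspaces with `o`
on their boundary. -/
def IsPolyhedralCone {d : ℕ} (C : Set (Euc d)) : Prop :=
  ∃ (n : ℕ) (u : Fin n → Euc d), C = {x | ∀ i, ⟪x, u i⟫ ≤ 0}

/-- A face of a cone `C`: either `C` itself or the intersection of `C` with a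
supporting hyperplane of `C` through `o`. -/
def IsFaceOf {d : ℕ} (C F : Set (Euc d)) : Prop :=
  F = C ∨ ∃ u : Euc d, u ≠ 0 ∧ (∀ x ∈ C, ⟪u, x⟫ ≤ 0) ∧ F = C ∩ {x | ⟪u, x⟫ = 0}

/-- Relative interior of a set containing `o` (relative to its linear span). -/
def relint {d : ℕ} (S : Set (Euc d)) : Set (Euc d) :=
  {x ∈ S | ∃ ε > 0, ∀ y ∈ (Submodule.span ℝ S : Set (Euc d)), dist y x < ε → y ∈ S}

/-- The `k`-skeleton of a polyhedral cone: the union of the relative interiors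
of its `k`-dimensional faces. -/
def skel {d : ℕ} (C : Set (Euc d)) (k : ℕ) : Set (Euc d) :=
  ⋃ F ∈ {F | IsFaceOf C F ∧ Module.finrank ℝ (Submodule.span ℝ F) = k}, relint F

/-- The conic support measure
`Ω_k(C,η) = P{Π_C(g) ∈ skel_k C, (Π_C(g), Π_{C°}(g)) ∈ η}`. -/
def conicSuppMeasure {d : ℕ} (C : Set (Euc d)) (k : ℕ) (η : Set (Euc d × Euc d)) : ℝ≥0∞ :=
  stdGaussian d {x | metricProj C x ∈ skel C k ∧
    (metricProj C x, metricProj (dualCone C) x) ∈ η}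

/-- `φ_f(C,η) = E [f(‖Π_C g‖², ‖Π_{C°} g‖²) · 1_η (Π_C g, Π_{C°} g)]` for a
standard Gaussian vector `g`. -/
def phiF {d : ℕ} (C : Set (Euc d)) (f : ℝ → ℝ → ℝ) (η : Set (Euc d × Euc d)) : ℝ≥0∞ :=
  ∫⁻ x, ENNReal.ofReal (f (‖metricProj C x‖ ^ 2) (‖metricProj (dualCone C) x‖ ^ 2)) *
      η.indicator (fun _ => (1 : ℝ≥0∞)) (metricProj C x, metricProj (dualCone C) x)
    ∂ stdGaussian d

/-- `ω_j = 2 π^{j/2} / Γ(j/2)`, the total spherical Lebesgue measure of `S^{j-1}`. -/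
def sphVol (j : ℕ) : ℝ := 2 * Real.pi ^ ((j : ℝ) / 2) / Real.Gamma ((j : ℝ) / 2)

/-- The coefficient functions `g_k` of the conic Steiner formula:
`g_k(λ) = (ω_k ω_{d-k} / ω_d) ∫_0^λ cos^{k-1} φ sin^{d-k-1} φ dφ` for
`1 ≤ k ≤ d-1`, and `g_d ≡ 1`. -/
def gcoef (d k : ℕ) (l : ℝ) : ℝ :=
  if k = d then 1
  else (sphVol k * sphVol (d - k) / sphVol d) *
    ∫ t in (0:ℝ)..l, Real.cos t ^ (k - 1) * Real.sin t ^ (d - k - 1)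

/-- The angular local parallel set
`M_λ^a(C,η) = {x : d_a(x,C) ≤ λ, (Π_C x, Π_{C°} x) ∈ η}`. -/
def angLocParallel {d : ℕ} (C : Set (Euc d)) (l : ℝ) (η : Set (Euc d × Euc d)) : Set (Euc d) :=
  {x | angDist C x ≤ l ∧ (metricProj C x, metricProj (dualCone C) x) ∈ η}

/-- The homogeneous extension of a function on `S^{d-1} × S^{d-1}`:
`f_h(x,y) = f(x/‖x‖, y/‖y‖)` for `x, y ≠ o`, and `0` otherwise. -/
def homExt {d : ℕ} (f : Metric.sphere (0 : Euc d) 1 × Metric.sphere (0 : Euc d) 1 → ℝ)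
    (p : Euc d × Euc d) : ℝ :=
  if h : p.1 ≠ 0 ∧ p.2 ≠ 0 then
    f (⟨‖p.1‖⁻¹ • p.1, by
          rw [mem_sphere_zero_iff_norm, norm_smul, norm_inv, norm_norm]
          exact inv_mul_cancel₀ (norm_ne_zero_iff.mpr h.1)⟩,
       ⟨‖p.2‖⁻¹ • p.2, by
          rw [mem_sphere_zero_iff_norm, norm_smul, norm_inv, norm_norm]
          exact inv_mul_cancel₀ (norm_ne_zero_iff.mpr h.2)⟩)
  else 0

/-- The angle between two vectors: `arccos ⟪x/‖x‖, y/‖y‖⟫` for `x, y ≠ o`,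
with `d_a(o,o) = 0` and `d_a(x,o) = d_a(o,x) = π/2` for `x ≠ o`. -/
def vecAngle {d : ℕ} (x y : Euc d) : ℝ :=
  if x = 0 ∧ y = 0 then 0
  else if x = 0 ∨ y = 0 then Real.pi / 2
  else Real.arccos ⟪‖x‖⁻¹ • x, ‖y‖⁻¹ • y⟫

/-- Membership in the class `F_bL`: functions on `S^{d-1} × S^{d-1}` with
Lipschitz constant `≤ 1` (w.r.t. the Euclidean norm on `ℝ^d × ℝ^d`) and
sup-norm `≤ 1`. -/
def memFbL {d : ℕ} (f : Metric.sphere (0 : Euc d) 1 × Metric.sphere (0 : Euc d) 1 → ℝ) : Prop :=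
  (∀ a b, |f a - f b| ≤
    Real.sqrt (‖(a.1 : Euc d) - (b.1 : Euc d)‖ ^ 2 + ‖(a.2 : Euc d) - (b.2 : Euc d)‖ ^ 2)) ∧
  ∀ a, |f a| ≤ 1


section AuxProj

variable {d : ℕ}

lemma aux_zero_mem {C : Set (Euc d)} (hC : IsClosedConvexCone C) : (0 : Euc d) ∈ C := by
  obtain ⟨⟨y, hy⟩, _, _, hcone⟩ := hC
  simpa using hcone y hy 0 le_rfl

lemma metricProj_spec {C : Set (Euc d)} (hC : IsClosedConvexCone C) (x : Euc d) :
    metricProj C x ∈ C ∧ ∀ z ∈ C, dist x (metricProj C x) ≤ dist x z := by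
  obtain ⟨hne, hcl, hconv, hcone⟩ := hC
  have hex : ∃ y ∈ C, ∀ z ∈ C, dist x y ≤ dist x z := by
    obtain ⟨v, hv, hveq⟩ := exists_norm_eq_iInf_of_complete_convex hne hcl.isComplete hconv x
    refine ⟨v, hv, fun z hz => ?_⟩
    have hbd : BddBelow (Set.range fun w : C => ‖x - (w : Euc d)‖) :=
      ⟨0, by rintro a ⟨w, rfl⟩; exact norm_nonneg _⟩
    have h := ciInf_le hbd (⟨z, hz⟩ : C)
    rw [dist_eq_norm, dist_eq_norm, hveq]
    exact h
  rw [metricProj, dif_pos hex]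
  exact hex.choose_spec

lemma metricProj_mem {C : Set (Euc d)} (hC : IsClosedConvexCone C) (x : Euc d) :
    metricProj C x ∈ C := (metricProj_spec hC x).1

lemma metricProj_inner_le {C : Set (Euc d)} (hC : IsClosedConvexCone C) (x : Euc d) :
    ∀ z ∈ C, ⟪x - metricProj C x, z - metricProj C x⟫ ≤ 0 := by
  obtain ⟨hpC, hmin⟩ := metricProj_spec hC x
  set p := metricProj C x with hp
  have hinf : ‖x - p‖ = ⨅ w : C, ‖x - (w : Euc d)‖ := by
    haveI : Nonempty C := ⟨⟨p, hpC⟩⟩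
    refine le_antisymm (le_ciInf fun w => ?_)
      (ciInf_le ⟨0, by rintro a ⟨w, rfl⟩; exact norm_nonneg _⟩ (⟨p, hpC⟩ : C))
    have h := hmin w w.2
    rwa [dist_eq_norm, dist_eq_norm] at h
  exact (norm_eq_iInf_iff_real_inner_le_zero hC.2.2.1 hpC).1 hinf

lemma metricProj_inner_self {C : Set (Euc d)} (hC : IsClosedConvexCone C) (x : Euc d) :
    ⟪x - metricProj C x, metricProj C x⟫ = 0 := by
  have h0 := metricProj_inner_le hC x 0 (aux_zero_mem hC)
  have h2 := metricProj_inner_le hC x ((2 : ℝ) • metricProj C x)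
    (hC.2.2.2 _ (metricProj_mem hC x) 2 (by norm_num))
  rw [zero_sub, inner_neg_right, neg_nonpos] at h0
  have h2' : ((2 : ℝ) • metricProj C x) - metricProj C x = metricProj C x := by
    rw [two_smul]; abel
  rw [h2'] at h2
  linarith

lemma metricProj_inner_nonpos {C : Set (Euc d)} (hC : IsClosedConvexCone C) (x : Euc d) :
    ∀ z ∈ C, ⟪x - metricProj C x, z⟫ ≤ 0 := by
  intro z hz
  have hmem : z + metricProj C x ∈ C := by
    have hhalf := hC.2.2.1 hz (metricProj_mem hC x)
      (by norm_num : (0:ℝ) ≤ 1/2) (by norm_num : (0:ℝ) ≤ 1/2) (by norm_num)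
    have := hC.2.2.2 _ hhalf 2 (by norm_num)
    rwa [smul_add, smul_smul, smul_smul, show (2:ℝ) * (1/2) = 1 by norm_num,
      one_smul, one_smul] at this
  have h := metricProj_inner_le hC x _ hmem
  rwa [add_sub_cancel_right] at h

lemma norm_sq_metricProj_decomp {C : Set (Euc d)} (hC : IsClosedConvexCone C) (x : Euc d) :
    ‖x‖ ^ 2 = ‖x - metricProj C x‖ ^ 2 + ‖metricProj C x‖ ^ 2 := by
  have h := norm_add_sq_real (x - metricProj C x) (metricProj C x)
  rw [sub_add_cancel, metricProj_inner_self hC x] at h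
  linarith

lemma norm_metricProj_le {C : Set (Euc d)} (hC : IsClosedConvexCone C) (x : Euc d) :
    ‖metricProj C x‖ ≤ ‖x‖ := by
  have h := norm_sq_metricProj_decomp hC x
  nlinarith [norm_nonneg (metricProj C x), norm_nonneg x, sq_nonneg ‖x - metricProj C x‖]

lemma norm_sub_metricProj_le {C : Set (Euc d)} (hC : IsClosedConvexCone C) (x : Euc d) :
    ‖x - metricProj C x‖ ≤ ‖x‖ := by
  have h := norm_sq_metricProj_decomp hC x
  nlinarith [norm_nonneg (metricProj C x), norm_nonneg x, sq_nonneg ‖metricProj C x‖]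

lemma metricProj_zero {C : Set (Euc d)} (hC : IsClosedConvexCone C) :
    metricProj C (0 : Euc d) = 0 := by
  have h := norm_sq_metricProj_decomp hC (0 : Euc d)
  rw [norm_zero, zero_sub, norm_neg] at h
  have : ‖metricProj C (0 : Euc d)‖ = 0 := by nlinarith [norm_nonneg (metricProj C (0:Euc d))]
  exact norm_eq_zero.1 this

lemma angDist_le_pi_div_two {C : Set (Euc d)} (x : Euc d) :
    angDist C x ≤ Real.pi / 2 := by
  rw [angDist]
  split_ifs
  · exact le_refl _
  · exact Real.arccos_le_pi_div_two.2 (div_nonneg (norm_nonneg _) (norm_nonneg _))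

lemma dist_metricProj_le_sin {C : Set (Euc d)} (hC : IsClosedConvexCone C) {y : Euc d}
    {δ : ℝ} (hδπ2 : δ ≤ Real.pi / 2) (hδ0 : 0 ≤ δ) (hang : angDist C y ≤ δ) :
    ‖y - metricProj C y‖ ≤ ‖y‖ * Real.sin δ := by
  have hδπ : δ ≤ Real.pi := by have := Real.pi_pos; linarith
  have hcosnn : 0 ≤ Real.cos δ := Real.cos_nonneg_of_mem_Icc ⟨by linarith [Real.pi_pos], hδπ2⟩
  have hs : 0 ≤ Real.sin δ := Real.sin_nonneg_of_nonneg_of_le_pi hδ0 hδπ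
  by_cases hy : y = 0
  · simp [hy, metricProj_zero hC]
  · have hpos : 0 < ‖y‖ := norm_pos_iff.2 hy
    rw [angDist, if_neg hy] at hang
    set t := ‖metricProj C y‖ / ‖y‖ with ht
    have ht0 : 0 ≤ t := div_nonneg (norm_nonneg _) (norm_nonneg _)
    have ht1 : t ≤ 1 := div_le_one_of_le₀ (norm_metricProj_le hC y) hpos.le
    have hcos : Real.cos δ ≤ t := by
      calc Real.cos δ ≤ Real.cos (Real.arccos t) :=
            Real.cos_le_cos_of_nonneg_of_le_pi (Real.arccos_nonneg t) hδπ hang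
        _ = t := Real.cos_arccos (by linarith) ht1
    have hp : Real.cos δ * ‖y‖ ≤ ‖metricProj C y‖ := by
      rw [ht, le_div_iff₀ hpos] at hcos
      linarith
    have hsq := norm_sq_metricProj_decomp hC y
    have hpyth : Real.sin δ ^ 2 + Real.cos δ ^ 2 = 1 := Real.sin_sq_add_cos_sq δ
    have hP2 : (Real.cos δ * ‖y‖) ^ 2 ≤ ‖metricProj C y‖ ^ 2 := by
      nlinarith [mul_nonneg hcosnn hpos.le]
    have ha2 : ‖y - metricProj C y‖ ^ 2 ≤ (‖y‖ * Real.sin δ) ^ 2 := by nlinarith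
    calc ‖y - metricProj C y‖ = Real.sqrt (‖y - metricProj C y‖ ^ 2) :=
          (Real.sqrt_sq (norm_nonneg _)).symm
      _ ≤ Real.sqrt ((‖y‖ * Real.sin δ) ^ 2) := Real.sqrt_le_sqrt ha2
      _ = ‖y‖ * Real.sin δ := Real.sqrt_sq (mul_nonneg (norm_nonneg _) hs)

end AuxProj

set_option maxHeartbeats 1000000 in
/-- For closed convex cones `C, D` of positive dimension and
any `x ∈ ℝ^d`, `‖Π_C x − Π_D x‖ ≤ ‖x‖ √(10 δ_a(C,D))`. -/
theorem norm_metricProj_sub_metricProj_le {d : ℕ} (hd : 2 ≤ d) (C D : Set (Euc d))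
    (hC : IsClosedConvexCone C) (hCp : PosDim C)
    (hD : IsClosedConvexCone D) (hDp : PosDim D) (x : Euc d) :
    ‖metricProj C x - metricProj D x‖ ≤ ‖x‖ * Real.sqrt (10 * angHaus C D) := by
  set δ := angHaus C D with hδdef
  set S := {l : ℝ | 0 ≤ l ∧ C ⊆ angParallel D l ∧ D ⊆ angParallel C l} with hSdef
  have hπ2 : Real.pi / 2 ∈ S := by
    refine ⟨by positivity, fun y _ => angDist_le_pi_div_two y, fun y _ => angDist_le_pi_div_two y⟩
  have hbdd : BddBelow S := ⟨0, fun l hl => hl.1⟩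
  have hne : S.Nonempty := ⟨_, hπ2⟩
  have hδS : δ = sInf S := rfl
  have hδ0 : 0 ≤ δ := hδS ▸ le_csInf hne fun l hl => hl.1
  have hδπ2 : δ ≤ Real.pi / 2 := by rw [hδS]; exact csInf_le hbdd hπ2
  have hδπ : δ ≤ Real.pi := by have := Real.pi_pos; linarith
  have hCD : ∀ y ∈ C, angDist D y ≤ δ := fun y hy =>
    hδS ▸ le_csInf hne fun l hl => hl.2.1 hy
  have hDC : ∀ y ∈ D, angDist C y ≤ δ := fun y hy =>
    hδS ▸ le_csInf hne fun l hl => hl.2.2 hy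
  set p := metricProj C x with hp
  set q := metricProj D x with hq
  have hs : 0 ≤ Real.sin δ := Real.sin_nonneg_of_nonneg_of_le_pi hδ0 hδπ
  have hsinδ : Real.sin δ ≤ δ := Real.sin_le hδ0
  -- distances from projections of one cone to the other cone
  have hqC : ‖q - metricProj C q‖ ≤ ‖q‖ * Real.sin δ :=
    dist_metricProj_le_sin hC hδπ2 hδ0 (hDC q (metricProj_mem hD x))
  have hpD : ‖p - metricProj D p‖ ≤ ‖p‖ * Real.sin δ :=
    dist_metricProj_le_sin hD hδπ2 hδ0 (hCD p (metricProj_mem hC x))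
  have hnp : ‖p‖ ≤ ‖x‖ := norm_metricProj_le hC x
  have hnq : ‖q‖ ≤ ‖x‖ := norm_metricProj_le hD x
  have hxp : ‖x - p‖ ≤ ‖x‖ := norm_sub_metricProj_le hC x
  have hxq : ‖x - q‖ ≤ ‖x‖ := norm_sub_metricProj_le hD x
  -- term 1
  have t1 : ⟪x - p, q - p⟫ ≤ ‖x‖ ^ 2 * Real.sin δ := by
    have hdecomp : (q - p) = (q - metricProj C q) + (metricProj C q - p) := by abel
    rw [hdecomp, inner_add_right]
    have h1 : ⟪x - p, metricProj C q - p⟫ ≤ 0 :=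
      metricProj_inner_le hC x _ (metricProj_mem hC q)
    have h2 : ⟪x - p, q - metricProj C q⟫ ≤ ‖x - p‖ * ‖q - metricProj C q‖ :=
      real_inner_le_norm _ _
    have h3 : ‖x - p‖ * ‖q - metricProj C q‖ ≤ ‖x‖ * (‖x‖ * Real.sin δ) := by
      have h4 : ‖q‖ * Real.sin δ ≤ ‖x‖ * Real.sin δ := by nlinarith
      have h5 : ‖q - metricProj C q‖ ≤ ‖x‖ * Real.sin δ := le_trans hqC h4
      have := norm_nonneg (x - p)
      have := norm_nonneg (q - metricProj C q)
      nlinarith [norm_nonneg x]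
    nlinarith
  -- term 2
  have t2 : ⟪x - q, p - q⟫ ≤ ‖x‖ ^ 2 * Real.sin δ := by
    have hdecomp : (p - q) = (p - metricProj D p) + (metricProj D p - q) := by abel
    rw [hdecomp, inner_add_right]
    have h1 : ⟪x - q, metricProj D p - q⟫ ≤ 0 :=
      metricProj_inner_le hD x _ (metricProj_mem hD p)
    have h2 : ⟪x - q, p - metricProj D p⟫ ≤ ‖x - q‖ * ‖p - metricProj D p‖ :=
      real_inner_le_norm _ _
    have h3 : ‖x - q‖ * ‖p - metricProj D p‖ ≤ ‖x‖ * (‖x‖ * Real.sin δ) := by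
      have h4 : ‖p‖ * Real.sin δ ≤ ‖x‖ * Real.sin δ := by nlinarith
      have h5 : ‖p - metricProj D p‖ ≤ ‖x‖ * Real.sin δ := le_trans hpD h4
      have := norm_nonneg (x - q)
      have := norm_nonneg (p - metricProj D p)
      nlinarith [norm_nonneg x]
    nlinarith
  -- key identity
  have hid : ‖p - q‖ ^ 2 = ⟪x - p, q - p⟫ + ⟪x - q, p - q⟫ := by
    rw [← real_inner_self_eq_norm_sq]
    simp only [inner_sub_left, inner_sub_right]
    linarith
  have hkey : ‖p - q‖ ^ 2 ≤ 10 * δ * ‖x‖ ^ 2 := by nlinarith [sq_nonneg ‖x‖]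
  have hrhs : 0 ≤ ‖x‖ * Real.sqrt (10 * δ) := by positivity
  have hsq : (‖x‖ * Real.sqrt (10 * δ)) ^ 2 = ‖x‖ ^ 2 * (10 * δ) := by
    rw [mul_pow, Real.sq_sqrt (by linarith : (0:ℝ) ≤ 10 * δ)]
  nlinarith [norm_nonneg (p - q), hkey, hrhs, hsq]
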